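/- For every ω ∈ Ω, every positive integer n and every s ∈ [0,1], the modulus of ∫_0^s e^{2πi H_n(ω,u)} du is at most √5/(2πn); in particular sup_{s∈[0,1]} |∫_0^s e^{2πi H_n(ω,u)} du| ≤ 1/n, uniformly in ω. -/

import Mathlib

open MeasureTheory Real

/-- For every `ω`, every `n ≥ 1` and every `s ∈ [0,1]`,
`|∫_0^s e^{2πiH_n(ω,u)} du| ≤ √5/(2πn) ≤ 1/n`, uniformly in `ω`. -/
theorem random_phase_exp_integral_bound
    {Ω : Type*} [MeasurableSpace Ω] (P : MeasureTheory.Measure Ω)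
    [MeasureTheory.IsProbabilityMeasure P]
    (X : ℕ → Ω → ℝ) (hXmeas : ∀ k, Measurable (X k))
    (hiid : ProbabilityTheory.iIndepFun X P)
    (hdist : ∀ k, P {ω | X k ω = 1} = 1/2 ∧ P {ω | X k ω = -1} = 1/2)
    (hpm : ∀ k ω, X k ω = 1 ∨ X k ω = -1)
    (H : ℕ → Ω → ℝ → ℝ)
    (hH : ∀ n : ℕ, 1 ≤ n → ∀ (ω : Ω) (k : ℕ), k ≤ n - 1 → ∀ u : ℝ,
      (k : ℝ) / n ≤ u → u ≤ ((k : ℝ) + 1) / n →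
      H n ω u = (∑ i ∈ Finset.range k, X (i + 1) ω) + n * X (k + 1) ω * (u - (k : ℝ) / n))
    :
    ∀ (ω : Ω) (n : ℕ), 1 ≤ n → ∀ s ∈ Set.Icc (0:ℝ) 1,
      ‖∫ u in (0:ℝ)..s, Complex.exp (2 * π * Complex.I * H n ω u)‖ ≤
        Real.sqrt 5 / (2 * π * n) ∧
      ‖∫ u in (0:ℝ)..s, Complex.exp (2 * π * Complex.I * H n ω u)‖ ≤
        1 / n := by
  intro ω n hn s hs
  have hn0 : (0:ℝ) < n := by exact_mod_cast hn
  have hnC : (n:ℂ) ≠ 0 := by exact_mod_cast hn0.ne'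
  set f : ℝ → ℂ := fun u => Complex.exp (2 * π * Complex.I * H n ω u) with hf
  set ε : ℕ → ℝ := fun k => X (k + 1) ω with hε
  have hε1 : ∀ k, ε k = 1 ∨ ε k = -1 := fun k => hpm (k+1) ω
  set c : ℕ → ℂ := fun k => ((2 * π * n * ε k : ℝ) : ℂ) * Complex.I with hc
  have hεR : ∀ k, (ε k : ℝ) ≠ 0 := by
    intro k; rcases hε1 k with h | h <;> rw [h] <;> norm_num
  have hcne : ∀ k, c k ≠ 0 := by
    intro k
    simp only [hc]
    apply mul_ne_zero _ Complex.I_ne_zero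
    rw [Complex.ofReal_ne_zero]
    exact mul_ne_zero (by positivity) (hεR k)
  have hSint : ∀ k : ℕ, ∃ m : ℤ, (m:ℝ) = ∑ i ∈ Finset.range k, X (i + 1) ω := by
    intro k
    induction k with
    | zero => exact ⟨0, by simp⟩
    | succ k ih =>
        obtain ⟨m, hm⟩ := ih
        rcases hpm (k+1) ω with h | h
        · exact ⟨m + 1, by rw [Finset.sum_range_succ, ← hm, h]; push_cast; ring⟩
        · exact ⟨m - 1, by rw [Finset.sum_range_succ, ← hm, h]; push_cast; ring⟩
  have hexp1 : ∀ k j : ℕ, Complex.exp (c k * ((((j:ℝ)/(n:ℝ)) : ℝ) : ℂ)) = 1 := by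
    intro k j
    rcases hε1 k with h | h
    · have he : c k * ((((j:ℝ)/(n:ℝ)) : ℝ) : ℂ) = ((j:ℤ):ℂ) * (2 * π * Complex.I) := by
        simp only [hc, h]; push_cast; field_simp
      rw [he, Complex.exp_int_mul_two_pi_mul_I]
    · have he : c k * ((((j:ℝ)/(n:ℝ)) : ℝ) : ℂ) = ((-(j:ℤ) : ℤ):ℂ) * (2 * π * Complex.I) := by
        simp only [hc, h]; push_cast; field_simp
      rw [he, Complex.exp_int_mul_two_pi_mul_I]
  have hexp1' : ∀ k : ℕ, Complex.exp (c k * (((((k:ℝ)+1)/(n:ℝ)) : ℝ) : ℂ)) = 1 := by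
    intro k
    have h := hexp1 k (k+1)
    have e : (((k+1 : ℕ):ℝ)/(n:ℝ)) = ((k:ℝ)+1)/(n:ℝ) := by push_cast; ring
    rwa [e] at h
  have hfun : ∀ k, k < n → ∀ u : ℝ, (k:ℝ)/n ≤ u → u ≤ ((k:ℝ)+1)/n →
      f u = Complex.exp (c k * u) := by
    intro k hk u hu1 hu2
    have hk' : k ≤ n - 1 := by omega
    have hHu := hH n hn ω k hk' u hu1 hu2
    obtain ⟨m, hm⟩ := hSint k
    obtain ⟨p, hp⟩ : ∃ p : ℤ, (p:ℝ) = (∑ i ∈ Finset.range k, X (i + 1) ω) - ε k * k := by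
      rcases hε1 k with h | h
      · exact ⟨m - k, by rw [h, ← hm]; push_cast; ring⟩
      · exact ⟨m + k, by rw [h, ← hm]; push_cast; ring⟩
    have hp' : ((p:ℤ):ℂ) = ((∑ i ∈ Finset.range k, X (i + 1) ω : ℝ) : ℂ)
        - ((ε k : ℝ) : ℂ) * ((k:ℕ):ℂ) := by
      exact_mod_cast congrArg (fun x : ℝ => (x : ℂ)) hp
    have key : 2 * (π:ℂ) * Complex.I * (H n ω u : ℝ) = ((p:ℤ):ℂ) * (2 * π * Complex.I) + c k * u := by
      rw [hHu, hp']
      simp only [hc]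
      push_cast
      field_simp
      ring
    show Complex.exp (2 * (π:ℂ) * Complex.I * ((H n ω u : ℝ) : ℂ)) = Complex.exp (c k * u)
    rw [key, Complex.exp_add, Complex.exp_int_mul_two_pi_mul_I, one_mul]
  have hint : ∀ k, k < n → ∀ t : ℝ, (k:ℝ)/n ≤ t → t ≤ ((k:ℝ)+1)/n →
      (∫ u in ((k:ℝ)/n)..t, f u) = (Complex.exp (c k * t) - 1) / c k := by
    intro k hk t ht1 ht2
    have hcongr : ∀ u ∈ Set.uIcc ((k:ℝ)/n) t, f u = Complex.exp (c k * u) := by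
      intro u hu
      rw [Set.uIcc_of_le ht1] at hu
      exact hfun k hk u hu.1 (hu.2.trans ht2)
    rw [intervalIntegral.integral_congr hcongr, integral_exp_mul_complex (hcne k),
      hexp1 k k]
  have hle : ∀ k : ℕ, (k:ℝ)/n ≤ ((k:ℝ)+1)/n := by
    intro k; apply (div_le_div_iff_of_pos_right hn0).mpr; linarith
  have hinteg : ∀ k, k < n → IntervalIntegrable f volume ((k:ℝ)/n) (((k:ℝ)+1)/n) := by
    intro k hk
    have hcont : IntervalIntegrable (fun u => Complex.exp (c k * u)) volume ((k:ℝ)/n) (((k:ℝ)+1)/n) :=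
      (Complex.continuous_exp.comp (continuous_const.mul Complex.continuous_ofReal)).intervalIntegrable _ _
    apply hcont.congr
    intro u hu
    rw [Set.uIoc_of_le (hle k)] at hu
    exact (hfun k hk u hu.1.le hu.2).symm
  have hcum : ∀ k, k ≤ n → (∫ u in (0:ℝ)..((k:ℝ)/n), f u) = 0 ∧
      IntervalIntegrable f volume 0 ((k:ℝ)/n) := by
    intro k
    induction k with
    | zero =>
        intro _
        simp only [Nat.cast_zero, zero_div]
        exact ⟨intervalIntegral.integral_same, IntervalIntegrable.refl⟩
    | succ k ih =>
        intro hk1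
        obtain ⟨h0, hI⟩ := ih (by omega)
        have hk : k < n := by omega
        have hpiece := hinteg k hk
        have hcast : ((k+1 : ℕ):ℝ) = (k:ℝ) + 1 := by push_cast; ring
        constructor
        · rw [hcast, ← intervalIntegral.integral_add_adjacent_intervals hI hpiece, h0, zero_add,
            hint k hk (((k:ℝ)+1)/n) (hle k) le_rfl, hexp1' k]
          simp
        · rw [hcast]; exact hI.trans hpiece
  -- choose the piece containing s
  obtain ⟨hs0, hs1⟩ := hs
  set k : ℕ := min (⌊(n:ℝ) * s⌋₊) (n - 1) with hk_def
  have hkn : k < n := by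
    have : k ≤ n - 1 := min_le_right _ _
    omega
  have hks : (k:ℝ)/n ≤ s := by
    rw [div_le_iff₀ hn0]
    have h1 : (k:ℝ) ≤ (⌊(n:ℝ) * s⌋₊ : ℝ) := by exact_mod_cast min_le_left _ _
    have h2 : ((⌊(n:ℝ) * s⌋₊ : ℕ):ℝ) ≤ (n:ℝ) * s := Nat.floor_le (by positivity)
    linarith [h1.trans h2]
  have hsk : s ≤ ((k:ℝ)+1)/n := by
    by_cases hcase : ⌊(n:ℝ) * s⌋₊ ≤ n - 1
    · have hkeq : k = ⌊(n:ℝ) * s⌋₊ := by rw [hk_def]; omega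
      rw [le_div_iff₀ hn0]
      have := Nat.lt_floor_add_one ((n:ℝ) * s)
      rw [hkeq]
      push_cast
      linarith [this]
    · have hge : n ≤ ⌊(n:ℝ) * s⌋₊ := by omega
      have : (n:ℝ) ≤ (n:ℝ) * s := by
        have := (Nat.le_floor_iff (by positivity : (0:ℝ) ≤ (n:ℝ) * s)).mp hge
        exact_mod_cast this
      have hs1' : s = 1 := by
        have hsge : 1 ≤ s := by
          nlinarith
        linarith
      have hkeq : k = n - 1 := by rw [hk_def]; omega
      rw [hkeq, hs1']
      rw [le_div_iff₀ hn0]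
      have : ((n - 1 : ℕ):ℝ) = (n:ℝ) - 1 := by
        have : (1:ℕ) ≤ n := hn
        push_cast [Nat.cast_sub this]
        ring
      rw [this]
      ring_nf
      linarith
  -- compute the integral
  have hIpart : IntervalIntegrable f volume ((k:ℝ)/n) s := by
    apply (hinteg k hkn).mono_set
    rw [Set.uIcc_of_le hks, Set.uIcc_of_le (hle k)]
    exact Set.Icc_subset_Icc le_rfl hsk
  obtain ⟨hzero, hIcum⟩ := hcum k hkn.le
  have hsplit : (∫ u in (0:ℝ)..s, f u) = (Complex.exp (c k * s) - 1) / c k := by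
    rw [← intervalIntegral.integral_add_adjacent_intervals hIcum hIpart, hzero, zero_add,
      hint k hkn s hks hsk]
  -- bound
  have habs_c : ‖c k‖ = 2 * π * n := by
    simp only [hc]
    rw [norm_mul, Complex.norm_I, Complex.norm_real, mul_one, Real.norm_eq_abs, abs_mul]
    rcases hε1 k with h | h <;> rw [h] <;>
      simp [abs_of_pos, pi_pos, hn0.le, abs_of_nonneg, mul_nonneg] <;>
      rw [abs_of_pos (by positivity)]
  have habs_exp : ‖Complex.exp (c k * s)‖ = 1 := by
    have : c k * s = ((2 * π * n * ε k * s : ℝ) : ℂ) * Complex.I := by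
      simp only [hc]; push_cast; ring
    rw [this, Complex.norm_exp_ofReal_mul_I]
  have hbound : ‖∫ u in (0:ℝ)..s, f u‖ ≤ 2 / (2 * π * n) := by
    rw [hsplit, norm_div, habs_c]
    gcongr
    calc ‖Complex.exp (c k * s) - 1‖
        ≤ ‖Complex.exp (c k * s)‖ + ‖(1:ℂ)‖ := norm_sub_le _ _
      _ = 2 := by rw [habs_exp, norm_one]; norm_num
  have h2pi : (0:ℝ) < 2 * π * n := by positivity
  have hsqrt5_ge : (2:ℝ) ≤ Real.sqrt 5 := by
    nlinarith [Real.sq_sqrt (by norm_num : (0:ℝ) ≤ 5), Real.sqrt_nonneg 5]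
  have hsqrt5_le : Real.sqrt 5 ≤ 2 * π := by
    nlinarith [Real.sq_sqrt (by norm_num : (0:ℝ) ≤ 5), Real.sqrt_nonneg 5, Real.pi_gt_three]
  have h1 : ‖∫ u in (0:ℝ)..s, f u‖ ≤ Real.sqrt 5 / (2 * π * n) := by
    apply hbound.trans
    gcongr
  constructor
  · exact h1
  · apply h1.trans
    rw [div_le_div_iff₀ h2pi hn0]
    nlinarith [hsqrt5_le, hn0]
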